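/- Let α = [a_1, ..., a_{2t}] be strictly increasing with a_i = a_{i-1} + 1 for i = 3, ..., 2t-1, and let β = [b_1,...,b_{2s}] be strictly increasing. Then β is NOT ≥ α in the Pfaffian order if and only if at least one of the following holds: (i) b_1 < a_1; (ii) b_2 < a_2; (iii) s = t and b_{2t} < a_{2t}; (iv) s > t. -/

import Mathlib

/-- The Pfaffian partial order on index lists. -/
def pfLe (x y : List ℕ) : Prop :=
  y.length ≤ x.length ∧ ∀ i < y.length, x.getD i 0 ≤ y.getD i 0

lemma chain'_getD_le (l : List ℕ) (hc : l.Chain' (· < ·)) :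
    ∀ d i, i + d < l.length → l.getD i 0 + d ≤ l.getD (i + d) 0 := by
  intro d
  induction d with
  | zero => intro i h; simp
  | succ d ih =>
    intro i h
    have h1 : i + d < l.length := by omega
    have h2 := ih i h1
    have h3 : l.getD (i + d) 0 < l.getD (i + d + 1) 0 := by
      rw [List.getD_eq_getElem l 0 h1,
        List.getD_eq_getElem l 0 (show i + d + 1 < l.length by omega)]
      have := List.isChain_iff_getElem.mp hc (i + d) (by omega)
      simpa using this
    have he : i + (d + 1) = (i + d) + 1 := by omega
    rw [he]
    omega

lemma alpha_eq (t : ℕ) (α : List ℕ)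
    (hmid : ∀ j, 2 ≤ j → j ≤ 2 * t - 2 → α.getD j 0 = α.getD (j - 1) 0 + 1) :
    ∀ j, 1 ≤ j → j ≤ 2 * t - 2 → α.getD j 0 = α.getD 1 0 + (j - 1) := by
  intro j
  induction j with
  | zero => omega
  | succ j ih =>
    intro h1 h2
    rcases Nat.eq_or_lt_of_le h1 with h | h
    · simp [← h]
    · have hj1 : 1 ≤ j := by omega
      have hih := ih hj1 (by omega)
      have hm := hmid (j + 1) (by omega) h2
      simp only [Nat.add_sub_cancel] at hm
      omega

/-- For `α = [a_1,...,a_{2t}]` strictly increasing with consecutive middle entries and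
`β = [b_1,...,b_{2s}]` strictly increasing, `β ≱ α` iff (i) `b_1 < a_1`, or (ii) `b_2 < a_2`,
or (iii) `s = t` and `b_{2t} < a_{2t}`, or (iv) `s > t`. (Lists are 0-indexed.) -/
theorem not_ge_iff (t s : ℕ) (ht : 1 ≤ t) (hs : 1 ≤ s) (α β : List ℕ)
    (hlenα : α.length = 2 * t) (hlenβ : β.length = 2 * s)
    (hcα : α.Chain' (· < ·)) (hcβ : β.Chain' (· < ·))
    (hmid : ∀ j, 2 ≤ j → j ≤ 2 * t - 2 → α.getD j 0 = α.getD (j - 1) 0 + 1) :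
    ¬ pfLe α β ↔
      (β.getD 0 0 < α.getD 0 0 ∨ β.getD 1 0 < α.getD 1 0 ∨
        (s = t ∧ β.getD (2 * t - 1) 0 < α.getD (2 * t - 1) 0) ∨ t < s) := by
  constructor
  · intro h
    by_cases hst : t < s
    · exact Or.inr (Or.inr (Or.inr hst))
    push_neg at hst
    unfold pfLe at h
    push_neg at h
    rw [hlenα, hlenβ] at h
    obtain ⟨i, hi, hlt⟩ := h (by omega)
    rcases Nat.lt_or_ge i 2 with hi2 | hi2
    · interval_cases i
      · exact Or.inl hlt
      · exact Or.inr (Or.inl hlt)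
    rcases Nat.lt_or_ge (2 * t - 2) i with hbig | hsmall
    · have hieq : i = 2 * t - 1 := by omega
      have hst' : s = t := by omega
      subst hieq
      exact Or.inr (Or.inr (Or.inl ⟨hst', hlt⟩))
    · refine Or.inr (Or.inl ?_)
      have hβ := chain'_getD_le β hcβ (i - 1) 1 (by omega)
      have h1 : 1 + (i - 1) = i := by omega
      rw [h1] at hβ
      have hα := alpha_eq t α hmid i (by omega) hsmall
      omega
  · rintro (h | h | ⟨hst, h⟩ | h) ⟨hlen, hall⟩
    · exact absurd (hall 0 (by rw [hlenβ]; omega)) (by omega)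
    · exact absurd (hall 1 (by rw [hlenβ]; omega)) (by omega)
    · exact absurd (hall (2 * t - 1) (by rw [hlenβ]; omega)) (by omega)
    · rw [hlenα, hlenβ] at hlen; omega
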